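/- arXiv:1612.06048 — 3 statements merged into one kernel-verified Lean document; each statement's English description precedes it below -/
import Mathlib

section
/- Let 𝓛 := span{a(m)b(n) : a,b ∈ 𝔥, m,n ∈ ℤ} ⊆ U(ĥ) (products taken in U(ĥ)). Then c ∈ 𝓛, and for all x, y ∈ 𝓛 the commutator [x, y] = xy − yx lies in c·𝓛 (the set of elements c·z with z ∈ 𝓛). In particular 𝓛 is closed under the rescaled bracket (1/c)[·,·]. -/
noncomputable section

variable (V : Type*) [AddCommGroup V] [Module ℂ V]

/-- The underlying space of the Heisenberg Lie algebra `𝔥 ⊗ ℂ[t,t⁻¹] ⊕ ℂ c` attached to a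
vector space `𝔥` with a bilinear form `B`; the element `(f, s)` represents
`∑ₘ (f m)(m) + s·c`, where `a(m)` denotes `a ⊗ tᵐ`. -/
def Heis (B : V →ₗ[ℂ] V →ₗ[ℂ] ℂ) : Type _ := (ℤ →₀ V) × ℂ

variable {V}
variable (B : V →ₗ[ℂ] V →ₗ[ℂ] ℂ)

instance : AddCommGroup (Heis V B) := inferInstanceAs (AddCommGroup ((ℤ →₀ V) × ℂ))
instance : Module ℂ (Heis V B) := inferInstanceAs (Module ℂ ((ℤ →₀ V) × ℂ))

namespace Heis

lemma add_fst (x y : Heis V B) : (x + y).1 = x.1 + y.1 := rfl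
lemma add_snd (x y : Heis V B) : (x + y).2 = x.2 + y.2 := rfl
lemma smul_fst (t : ℂ) (x : Heis V B) : (t • x).1 = t • x.1 := rfl
lemma smul_snd (t : ℂ) (x : Heis V B) : (t • x).2 = t • x.2 := rfl
lemma zero_fst : (0 : Heis V B).1 = 0 := rfl
lemma zero_snd : (0 : Heis V B).2 = 0 := rfl

end Heis

/-- The pairing `∑ₘ m · B (f m) (g (−m))` giving the central term of the bracket. -/
def heisP (f g : ℤ →₀ V) : ℂ := f.sum fun m a => (m : ℂ) * B a (g (-m))

lemma heisP_zero_left (g : ℤ →₀ V) : heisP B 0 g = 0 := Finsupp.sum_zero_index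

lemma heisP_zero_right (f : ℤ →₀ V) : heisP B f 0 = 0 := by
  simp [heisP]

lemma heisP_add_left (f f' g : ℤ →₀ V) :
    heisP B (f + f') g = heisP B f g + heisP B f' g := by
  unfold heisP
  refine Finsupp.sum_add_index' (fun m => by simp) (fun m a a' => by simp [mul_add])

lemma heisP_add_right (f g g' : ℤ →₀ V) :
    heisP B f (g + g') = heisP B f g + heisP B f g' := by
  unfold heisP
  rw [← Finsupp.sum_add]
  exact Finsupp.sum_congr fun m _ => by simp [mul_add]

lemma heisP_smul_left (t : ℂ) (f g : ℤ →₀ V) : heisP B (t • f) g = t * heisP B f g := by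
  unfold heisP
  rw [Finsupp.sum_smul_index' (fun m => by simp), Finsupp.sum, Finsupp.sum, Finset.mul_sum]
  refine Finset.sum_congr rfl fun m _ => ?_
  simp only [map_smul, LinearMap.smul_apply, smul_eq_mul]
  ring

lemma heisP_smul_right (t : ℂ) (f g : ℤ →₀ V) : heisP B f (t • g) = t * heisP B f g := by
  unfold heisP
  rw [Finsupp.sum, Finsupp.sum, Finset.mul_sum]
  refine Finset.sum_congr rfl fun m _ => ?_
  simp only [Finsupp.smul_apply, map_smul, smul_eq_mul]
  ring

instance : LieRing (Heis V B) where
  bracket x y := (0, (heisP B x.1 y.1 - heisP B y.1 x.1) / 2)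
  add_lie x y z := by
    refine Prod.ext ?_ ?_
    · exact (zero_add (0 : ℤ →₀ V)).symm
    · show (heisP B (x + y).1 z.1 - heisP B z.1 (x + y).1) / 2 =
        (heisP B x.1 z.1 - heisP B z.1 x.1) / 2 + (heisP B y.1 z.1 - heisP B z.1 y.1) / 2
      rw [Heis.add_fst, heisP_add_left, heisP_add_right]
      ring
  lie_add x y z := by
    refine Prod.ext ?_ ?_
    · exact (zero_add (0 : ℤ →₀ V)).symm
    · show (heisP B x.1 (y + z).1 - heisP B (y + z).1 x.1) / 2 =
        (heisP B x.1 y.1 - heisP B y.1 x.1) / 2 + (heisP B x.1 z.1 - heisP B z.1 x.1) / 2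
      rw [Heis.add_fst, heisP_add_left, heisP_add_right]
      ring
  lie_self x := by
    refine Prod.ext rfl ?_
    show (heisP B x.1 x.1 - heisP B x.1 x.1) / 2 = (0 : Heis V B).2
    rw [Heis.zero_snd]
    ring
  leibniz_lie x y z := by
    refine Prod.ext ?_ ?_
    · exact (zero_add (0 : ℤ →₀ V)).symm
    · show (heisP B x.1 (0 : ℤ →₀ V) - heisP B (0 : ℤ →₀ V) x.1) / 2 =
        (heisP B (0 : ℤ →₀ V) z.1 - heisP B z.1 (0 : ℤ →₀ V)) / 2 +
        (heisP B y.1 (0 : ℤ →₀ V) - heisP B (0 : ℤ →₀ V) y.1) / 2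
      rw [heisP_zero_left, heisP_zero_right, heisP_zero_left, heisP_zero_right,
        heisP_zero_left, heisP_zero_right]
      ring

instance : LieAlgebra ℂ (Heis V B) where
  lie_smul t x y := by
    refine Prod.ext ?_ ?_
    · exact (smul_zero t).symm
    · show (heisP B x.1 (t • y).1 - heisP B (t • y).1 x.1) / 2 =
        t • ((heisP B x.1 y.1 - heisP B y.1 x.1) / 2)
      rw [Heis.smul_fst, heisP_smul_left, heisP_smul_right, smul_eq_mul]
      ring

/-- `a(m) = a ⊗ tᵐ` as an element of the Heisenberg Lie algebra. -/
def Heis.gen (a : V) (m : ℤ) : Heis V B := (Finsupp.single m a, 0)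

/-- The central element `c` of the Heisenberg Lie algebra. -/
def Heis.cen : Heis V B := (0, 1)


/-- `U(ĥ)`, the universal enveloping algebra of the Heisenberg Lie algebra. -/
abbrev UHeis : Type _ := UniversalEnvelopingAlgebra ℂ (Heis V B)

/-- The image of `a(m)` in `U(ĥ)`. -/
def genU (a : V) (m : ℤ) : UHeis B := UniversalEnvelopingAlgebra.ι ℂ (Heis.gen B a m)

/-- The image of `c` in `U(ĥ)`. -/
def cenU : UHeis B := UniversalEnvelopingAlgebra.ι ℂ (Heis.cen B)

/-- `𝓛 = span{a(m)b(n) : a,b ∈ 𝔥, m,n ∈ ℤ} ⊆ U(ĥ)`. -/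
def spanL : Submodule ℂ (UHeis B) :=
  Submodule.span ℂ {x : UHeis B | ∃ a b : V, ∃ m n : ℤ, x = genU B a m * genU B b n}


section Aux

attribute [local instance 100] LieRing.ofAssociativeRing

lemma heisP_single_single (a b : V) (m n : ℤ) :
    heisP B (Finsupp.single m a) (Finsupp.single n b)
      = (m : ℂ) * B a (Finsupp.single n b (-m)) := by
  unfold heisP
  exact Finsupp.sum_single_index (by simp)

lemma heis_bracket (x y : Heis V B) :
    ⁅x, y⁆ = ((0 : ℤ →₀ V), (heisP B x.1 y.1 - heisP B y.1 x.1) / 2) := rfl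

lemma lie_gen_gen (hsym : ∀ x y, B x y = B y x) (a b : V) (m n : ℤ) :
    ⁅Heis.gen B a m, Heis.gen B b n⁆ =
      (if n = -m then (m : ℂ) * B a b else 0) • Heis.cen B := by
  rw [heis_bracket]
  refine Prod.ext (by rw [Heis.smul_fst]; by_cases h : n = -m <;> simp [h, Heis.cen]) ?_
  show (heisP B (Finsupp.single m a) (Finsupp.single n b)
      - heisP B (Finsupp.single n b) (Finsupp.single m a)) / 2
      = ((if n = -m then (m : ℂ) * B a b else 0) • Heis.cen B).2
  rw [Heis.smul_snd]
  show _ = (if n = -m then (m : ℂ) * B a b else 0) • (1 : ℂ)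
  rw [heisP_single_single, heisP_single_single]
  by_cases h : n = -m
  · subst h
    simp only [Finsupp.single_apply, neg_neg, if_pos rfl, if_true, smul_eq_mul, mul_one]
    rw [hsym b a]
    push_cast
    ring
  · have h' : m ≠ -n := fun hm => h (by omega)
    simp only [Finsupp.single_apply, if_neg h, if_neg h', if_neg (Ne.symm h')]
    simp [Finsupp.single_eq_of_ne, h]

lemma lie_cen_gen (a : V) (m : ℤ) : ⁅Heis.cen B, Heis.gen B a m⁆ = 0 := by
  rw [heis_bracket]
  refine Prod.ext rfl ?_
  show (heisP B (0 : ℤ →₀ V) _ - heisP B _ (0 : ℤ →₀ V)) / 2 = (0 : Heis V B).2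
  rw [heisP_zero_left, heisP_zero_right, Heis.zero_snd]
  ring

lemma commU (hsym : ∀ x y, B x y = B y x) (a b : V) (m n : ℤ) :
    genU B a m * genU B b n - genU B b n * genU B a m
      = (if n = -m then (m : ℂ) * B a b else 0) • cenU B := by
  have h := (UniversalEnvelopingAlgebra.ι ℂ (L := Heis V B)).map_lie
    (Heis.gen B a m) (Heis.gen B b n)
  rw [lie_gen_gen B hsym, Ring.lie_def, map_smul] at h
  exact h.symm

lemma commute_cenU (a : V) (m : ℤ) : Commute (cenU B) (genU B a m) := by
  have h := (UniversalEnvelopingAlgebra.ι ℂ (L := Heis V B)).map_lie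
    (Heis.cen B) (Heis.gen B a m)
  rw [lie_cen_gen, Ring.lie_def, map_zero] at h
  exact sub_eq_zero.mp h.symm

lemma comm_aux {R : Type*} [Ring R] (A B C D e f g h : R)
    (h1 : B * C = C * B + e) (h2 : B * D = D * B + f)
    (h3 : A * C = C * A + g) (h4 : A * D = D * A + h) :
    (A * B) * (C * D) - (C * D) * (A * B)
      = A * e * D + A * (C * f) + g * (D * B) + C * h * B := by
  have key : (A * B) * (C * D)
      = (C * D) * (A * B) + (A * e * D + A * (C * f) + g * (D * B) + C * h * B) := by
    calc (A * B) * (C * D) = A * (B * C) * D := by noncomm_ring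
      _ = A * (C * B + e) * D := by rw [h1]
      _ = (A * C) * (B * D) + A * e * D := by noncomm_ring
      _ = (A * C) * (D * B + f) + A * e * D := by rw [h2]
      _ = (A * C) * (D * B) + (A * (C * f) + A * e * D) := by noncomm_ring
      _ = (C * A + g) * (D * B) + (A * (C * f) + A * e * D) := by rw [h3]
      _ = C * (A * D) * B + (g * (D * B) + A * (C * f) + A * e * D) := by noncomm_ring
      _ = C * (D * A + h) * B + (g * (D * B) + A * (C * f) + A * e * D) := by rw [h4]
      _ = (C * D) * (A * B)
            + (A * e * D + A * (C * f) + g * (D * B) + C * h * B) := by noncomm_ring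
  rw [key, add_sub_cancel_left]

lemma move1 (X Y : UHeis B) (hX : Commute (cenU B) X) (s : ℂ) :
    X * (s • cenU B) * Y = s • (cenU B * (X * Y)) := by
  rw [mul_smul_comm, smul_mul_assoc, ← hX.eq, mul_assoc]

end Aux

/-- `c ∈ 𝓛`, and `𝓛` is closed under the rescaled bracket: for
`x, y ∈ 𝓛` the commutator `xy − yx` lies in `c·𝓛`. -/
theorem cen_mem_spanL_and_commutator_mem_c_mul_spanL
    [FiniteDimensional ℂ V] (hdim : 1 ≤ Module.finrank ℂ V)
    (hsym : ∀ x y, B x y = B y x)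
    (hnd : ∀ x, (∀ y, B x y = 0) → x = 0) :
    cenU B ∈ spanL B ∧
      ∀ x ∈ spanL B, ∀ y ∈ spanL B, ∃ z ∈ spanL B, x * y - y * x = cenU B * z := by
  constructor
  · -- c ∈ 𝓛
    have : Nontrivial V := by
      have : 0 < Module.finrank ℂ V := hdim
      exact Module.nontrivial_of_finrank_pos this
    obtain ⟨v, hv⟩ := exists_ne (0 : V)
    have hvne : ¬ ∀ y, B v y = 0 := fun h => hv (hnd v h)
    push_neg at hvne
    obtain ⟨w, hw⟩ := hvne
    have hcomm := commU B hsym v w 1 (-1)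
    rw [if_pos rfl] at hcomm
    have hmem : genU B v 1 * genU B w (-1) - genU B w (-1) * genU B v 1 ∈ spanL B :=
      sub_mem (Submodule.subset_span ⟨v, w, 1, -1, rfl⟩)
        (Submodule.subset_span ⟨w, v, -1, 1, rfl⟩)
    rw [hcomm] at hmem
    have : cenU B = (((1:ℤ) : ℂ) * B v w)⁻¹ • ((((1:ℤ) : ℂ) * B v w) • cenU B) := by
      rw [smul_smul, inv_mul_cancel₀ (by push_cast; simpa using hw), one_smul]
    rw [this]
    exact Submodule.smul_mem _ _ hmem
  · -- commutators
    set M := Submodule.map (LinearMap.mulLeft ℂ (cenU B)) (spanL B) with hM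
    have main : ∀ x ∈ spanL B, ∀ y ∈ spanL B, x * y - y * x ∈ M := by
      intro x hx
      induction hx using Submodule.span_induction with
      | mem x hxg =>
        intro y hy
        induction hy using Submodule.span_induction with
        | mem y hyg =>
          obtain ⟨a, b, m, n, rfl⟩ := hxg
          obtain ⟨c, d, p, q, rfl⟩ := hyg
          set A := genU B a m
          set Bb := genU B b n
          set C := genU B c p
          set D := genU B d q
          set s1 := (if p = -n then (n : ℂ) * B b c else 0)
          set s2 := (if q = -n then (n : ℂ) * B b d else 0)
          set s3 := (if p = -m then (m : ℂ) * B a c else 0)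
          set s4 := (if q = -m then (m : ℂ) * B a d else 0)
          have h1 : Bb * C = C * Bb + s1 • cenU B := by
            have := commU B hsym b c n p; rw [sub_eq_iff_eq_add] at this
            linear_combination (norm := noncomm_ring) this
          have h2 : Bb * D = D * Bb + s2 • cenU B := by
            have := commU B hsym b d n q; rw [sub_eq_iff_eq_add] at this
            linear_combination (norm := noncomm_ring) this
          have h3 : A * C = C * A + s3 • cenU B := by
            have := commU B hsym a c m p; rw [sub_eq_iff_eq_add] at this
            linear_combination (norm := noncomm_ring) this
          have h4 : A * D = D * A + s4 • cenU B := by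
            have := commU B hsym a d m q; rw [sub_eq_iff_eq_add] at this
            linear_combination (norm := noncomm_ring) this
          have key := comm_aux A Bb C D (s1 • cenU B) (s2 • cenU B)
            (s3 • cenU B) (s4 • cenU B) h1 h2 h3 h4
          have hzel : s1 • (A * D) + s2 • (A * C) + s3 • (D * Bb) + s4 • (C * Bb)
              ∈ spanL B := by
            refine add_mem (add_mem (add_mem ?_ ?_) ?_) ?_ <;>
              exact Submodule.smul_mem _ _ (Submodule.subset_span ⟨_, _, _, _, rfl⟩)
          refine ⟨_, hzel, ?_⟩
          show LinearMap.mulLeft ℂ (cenU B) _ = _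
          rw [LinearMap.mulLeft_apply, key]
          rw [move1 B A D (commute_cenU B a m) s1]
          have hAC : A * (C * (s2 • cenU B)) = s2 • (cenU B * (A * C)) := by
            rw [mul_smul_comm, mul_smul_comm, ← mul_assoc,
              ← ((commute_cenU B a m).mul_right (commute_cenU B c p)).eq]
          rw [hAC]
          rw [smul_mul_assoc (s3) (cenU B) (D * Bb)]
          rw [move1 B C Bb (commute_cenU B c p) s4]
          rw [mul_add, mul_add, mul_add, mul_smul_comm, mul_smul_comm,
            mul_smul_comm, mul_smul_comm]
        | zero => exact ⟨0, zero_mem _, by simp⟩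
        | add y z hy hz ihy ihz =>
          have h : x * (y + z) - (y + z) * x = (x * y - y * x) + (x * z - z * x) := by
            noncomm_ring
          rw [h]; exact add_mem ihy ihz
        | smul t y hy ihy =>
          have h : x * (t • y) - (t • y) * x = t • (x * y - y * x) := by
            rw [mul_smul_comm, smul_mul_assoc, smul_sub]
          rw [h]; exact Submodule.smul_mem _ _ ihy
      | zero => intro y hy; exact ⟨0, zero_mem _, by simp⟩
      | add x w hx hw ihx ihw =>
        intro y hy
        have h : (x + w) * y - y * (x + w) = (x * y - y * x) + (w * y - y * w) := by
          noncomm_ring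
        rw [h]; exact add_mem (ihx y hy) (ihw y hy)
      | smul t x hx ihx =>
        intro y hy
        have h : (t • x) * y - y * (t • x) = t • (x * y - y * x) := by
          rw [mul_smul_comm, smul_mul_assoc, smul_sub]
        rw [h]; exact Submodule.smul_mem _ _ (ihx y hy)
    intro x hx y hy
    obtain ⟨z, hz, hzeq⟩ := main x hx y hy
    exact ⟨z, hz, hzeq.symm⟩
end
end

section
/- Let 𝓛 := span{a(m)b(n) : a,b ∈ 𝔥, m,n ∈ ℤ} ⊆ U(ĥ) and let 𝓘 := span{L_{a,b}(m,n) : a,b ∈ 𝔥, m,n ∈ ℤ with mn = 0}. Then for all x ∈ 𝓘 and y ∈ 𝓛, the commutator [x, y] = xy − yx lies in c·𝓘, i.e. 𝓘 is an ideal of 𝓛 with respect to the rescaled bracket (1/c)[·,·]. -/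
noncomputable section

variable (V : Type*) [AddCommGroup V] [Module ℂ V]

variable {V}
variable (B : V →ₗ[ℂ] V →ₗ[ℂ] ℂ)

/-- The normal ordering `:a(m)b(n):` in `U(ĥ)`. -/
def no (a b : V) (m n : ℤ) : UHeis B :=
  if n ≤ m then genU B b n * genU B a m else genU B a m * genU B b n

/-- `L_{a,b}(m,n) := ½ :a(m)b(n):`. -/
def LU (a b : V) (m n : ℤ) : UHeis B := (2⁻¹ : ℂ) • no B a b m n

/-- `𝓘 = span{L_{a,b}(m,n) : a,b ∈ 𝔥, m,n ∈ ℤ, mn = 0}`. -/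
def spanI : Submodule ℂ (UHeis B) :=
  Submodule.span ℂ {x : UHeis B | ∃ a b : V, ∃ m n : ℤ, m * n = 0 ∧ x = LU B a b m n}

/-- The structure constant of the bracket of two generators. -/
def kappa (a b : V) (m n : ℤ) : ℂ :=
  if m + n = 0 then ((m : ℂ) * B a b + (m : ℂ) * B b a) / 2 else 0

lemma heisP_single (a b : V) (m n : ℤ) :
    heisP B (Finsupp.single m a) (Finsupp.single n b) =
      if m + n = 0 then (m : ℂ) * B a b else 0 := by
  unfold heisP
  rw [Finsupp.sum_single_index (by simp), Finsupp.single_apply]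
  by_cases h : m + n = 0
  · rw [if_pos (by omega : n = -m), if_pos h]
  · rw [if_neg (by omega : ¬ n = -m), if_neg h]
    simp

lemma lie_gen (a b : V) (m n : ℤ) :
    ⁅Heis.gen B a m, Heis.gen B b n⁆ = kappa B a b m n • Heis.cen B := by
  refine Prod.ext ?_ ?_
  · show (0 : ℤ →₀ V) = (kappa B a b m n • Heis.cen B).1
    rw [Heis.smul_fst]
    exact (smul_zero _).symm
  · show (heisP B (Finsupp.single m a) (Finsupp.single n b) -
        heisP B (Finsupp.single n b) (Finsupp.single m a)) / 2 =
      (kappa B a b m n • Heis.cen B).2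
    rw [Heis.smul_snd, heisP_single, heisP_single]
    show _ = kappa B a b m n • (1 : ℂ)
    rw [smul_eq_mul, mul_one]
    unfold kappa
    by_cases h : m + n = 0
    · rw [if_pos h, if_pos (by omega : n + m = 0), if_pos h]
      have hn : (n : ℂ) = -(m : ℂ) := by
        have : n = -m := by omega
        rw [this]; push_cast; ring
      rw [hn]; ring
    · rw [if_neg h, if_neg (by omega : ¬ n + m = 0), if_neg h]
      ring

attribute [local instance 100] LieRing.ofAssociativeRing

lemma genU_comm (a b : V) (m n : ℤ) :
    genU B a m * genU B b n - genU B b n * genU B a m = kappa B a b m n • cenU B := by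
  have h := (UniversalEnvelopingAlgebra.ι ℂ (L := Heis V B)).map_lie
    (Heis.gen B a m) (Heis.gen B b n)
  rw [Ring.lie_def] at h
  unfold genU cenU
  rw [← h, lie_gen, map_smul]

lemma lie_cen (x : Heis V B) : ⁅Heis.cen B, x⁆ = 0 := by
  refine Prod.ext rfl ?_
  show (heisP B 0 x.1 - heisP B x.1 0) / 2 = (0 : Heis V B).2
  rw [heisP_zero_left, heisP_zero_right, Heis.zero_snd]
  ring

lemma cenU_comm_genU (a : V) (m : ℤ) :
    cenU B * genU B a m = genU B a m * cenU B := by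
  have h := (UniversalEnvelopingAlgebra.ι ℂ (L := Heis V B)).map_lie
    (Heis.cen B) (Heis.gen B a m)
  rw [Ring.lie_def, lie_cen, map_zero] at h
  exact sub_eq_zero.mp h.symm

lemma kappa_eq_zero_of_mul_eq_zero (a b : V) (m n : ℤ) (h : m * n = 0) :
    kappa B a b m n = 0 := by
  unfold kappa
  split_ifs with hmn
  · have hm : m = 0 := by
      rcases mul_eq_zero.mp h with h0 | h0
      · exact h0
      · omega
    rw [hm]; push_cast; ring
  · rfl

lemma genU_comm_of (a b : V) (m n : ℤ) (h : m * n = 0) :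
    genU B a m * genU B b n = genU B b n * genU B a m := by
  have := genU_comm B a b m n
  rw [kappa_eq_zero_of_mul_eq_zero B a b m n h, zero_smul] at this
  exact sub_eq_zero.mp this

lemma prod_eq_two_smul_LU (a b : V) (m n : ℤ) (h : m * n = 0) :
    genU B a m * genU B b n = (2 : ℂ) • LU B a b m n := by
  unfold LU no
  rw [smul_smul]
  norm_num
  intro hle
  exact genU_comm_of B a b m n h

lemma prod_mem_spanI (a b : V) (m n : ℤ) (h : m * n = 0) :
    genU B a m * genU B b n ∈ spanI B := by
  rw [prod_eq_two_smul_LU B a b m n h]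
  exact Submodule.smul_mem _ _ (Submodule.subset_span ⟨a, b, m, n, h, rfl⟩)

lemma kappa_smul_mem (c d : V) (r s : ℤ) (x y : V) (u v : ℤ) (h : r ≠ 0 → u * v = 0) :
    kappa B c d r s • (genU B x u * genU B y v) ∈ spanI B := by
  by_cases hr : r = 0
  · subst hr
    have h0 : kappa B c d 0 s = 0 := by unfold kappa; split_ifs <;> simp
    rw [h0, zero_smul]
    exact zero_mem _
  · exact Submodule.smul_mem _ _ (prod_mem_spanI B x y u v (h hr))

lemma core_identity {R : Type*} [Ring R] [Algebra ℂ R] (A Bb C D c : R)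
    (κ1 κ2 κ3 κ4 : ℂ)
    (hAc : A * c = c * A) (hCc : C * c = c * C)
    (h1 : Bb * C - C * Bb = κ1 • c) (h2 : Bb * D - D * Bb = κ2 • c)
    (h3 : A * C - C * A = κ3 • c) (h4 : A * D - D * A = κ4 • c) :
    (A * Bb) * (C * D) - (C * D) * (A * Bb) =
      c * (κ1 • (A * D) + κ2 • (A * C) + κ3 • (D * Bb) + κ4 • (C * Bb)) := by
  have key : (A * Bb) * (C * D) - (C * D) * (A * Bb) =
      A * (Bb * C - C * Bb) * D + A * C * (Bb * D - D * Bb) +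
        (A * C - C * A) * (D * Bb) + C * (A * D - D * A) * Bb := by
    noncomm_ring
  have t1 : A * (κ1 • c) * D = c * (κ1 • (A * D)) := by
    rw [mul_smul_comm, smul_mul_assoc, mul_smul_comm, hAc, mul_assoc]
  have t2 : A * C * (κ2 • c) = c * (κ2 • (A * C)) := by
    rw [mul_smul_comm, mul_smul_comm]
    congr 1
    rw [mul_assoc, hCc, ← mul_assoc, hAc, mul_assoc]
  have t3 : (κ3 • c) * (D * Bb) = c * (κ3 • (D * Bb)) := by
    rw [smul_mul_assoc, mul_smul_comm]
  have t4 : C * (κ4 • c) * Bb = c * (κ4 • (C * Bb)) := by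
    rw [mul_smul_comm, smul_mul_assoc, mul_smul_comm, hCc, mul_assoc]
  rw [key, h1, h2, h3, h4, t1, t2, t3, t4, ← mul_add, ← mul_add, ← mul_add]

lemma gen_case (a b : V) (m n : ℤ) (h : m * n = 0) (a' b' : V) (p q : ℤ) :
    ∃ z ∈ spanI B,
      LU B a b m n * (genU B a' p * genU B b' q) -
        (genU B a' p * genU B b' q) * LU B a b m n = cenU B * z := by
  set A := genU B a m with hA
  set Bb := genU B b n with hBb
  set C := genU B a' p with hC
  set D := genU B b' q with hD
  have hcore := core_identity A Bb C D (cenU B)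
    (kappa B b a' n p) (kappa B b b' n q) (kappa B a a' m p) (kappa B a b' m q)
    (cenU_comm_genU B a m).symm (cenU_comm_genU B a' p).symm
    (genU_comm B b a' n p) (genU_comm B b b' n q)
    (genU_comm B a a' m p) (genU_comm B a b' m q)
  refine ⟨(2⁻¹ : ℂ) • (kappa B b a' n p • (A * D) + kappa B b b' n q • (A * C) +
      kappa B a a' m p • (D * Bb) + kappa B a b' m q • (C * Bb)), ?_, ?_⟩
  · refine Submodule.smul_mem _ _ (add_mem (add_mem (add_mem ?_ ?_) ?_) ?_)
    · exact kappa_smul_mem B b a' n p a b' m q (fun hn => by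
        rcases mul_eq_zero.mp h with h0 | h0
        · rw [h0, zero_mul]
        · exact absurd h0 hn)
    · exact kappa_smul_mem B b b' n q a a' m p (fun hn => by
        rcases mul_eq_zero.mp h with h0 | h0
        · rw [h0, zero_mul]
        · exact absurd h0 hn)
    · exact kappa_smul_mem B a a' m p b' b q n (fun hm => by
        rcases mul_eq_zero.mp h with h0 | h0
        · exact absurd h0 hm
        · rw [h0, mul_zero])
    · exact kappa_smul_mem B a b' m q a' b p n (fun hm => by
        rcases mul_eq_zero.mp h with h0 | h0
        · exact absurd h0 hm
        · rw [h0, mul_zero])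
  · have hLU : LU B a b m n = (2⁻¹ : ℂ) • (A * Bb) := by
      rw [hA, hBb, prod_eq_two_smul_LU B a b m n h, smul_smul]
      norm_num
    rw [hLU, smul_mul_assoc, mul_smul_comm, ← smul_sub, hcore, mul_smul_comm]

/-- `𝓘` is an ideal of `𝓛` for the rescaled bracket: for `x ∈ 𝓘` and
`y ∈ 𝓛`, the commutator `xy − yx` lies in `c·𝓘`. -/
theorem commutator_spanI_spanL_mem_c_mul_spanI
    [FiniteDimensional ℂ V] (hdim : 1 ≤ Module.finrank ℂ V)
    (hsym : ∀ x y, B x y = B y x)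
    (hnd : ∀ x, (∀ y, B x y = 0) → x = 0) :
    ∀ x ∈ spanI B, ∀ y ∈ spanL B, ∃ z ∈ spanI B, x * y - y * x = cenU B * z := by
  intro x hx
  unfold spanI at hx
  induction hx using Submodule.span_induction with
  | mem x hxs =>
    obtain ⟨a, b, m, n, hmn, rfl⟩ := hxs
    intro y hy
    unfold spanL at hy
    induction hy using Submodule.span_induction with
    | mem y hys =>
      obtain ⟨a', b', p, q, rfl⟩ := hys
      exact gen_case B a b m n hmn a' b' p q
    | zero => exact ⟨0, zero_mem _, by simp⟩
    | add y1 y2 _ _ ih1 ih2 =>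
      obtain ⟨z1, hz1, e1⟩ := ih1
      obtain ⟨z2, hz2, e2⟩ := ih2
      refine ⟨z1 + z2, add_mem hz1 hz2, ?_⟩
      have hsplit : LU B a b m n * (y1 + y2) - (y1 + y2) * LU B a b m n =
          (LU B a b m n * y1 - y1 * LU B a b m n) +
            (LU B a b m n * y2 - y2 * LU B a b m n) := by noncomm_ring
      rw [hsplit, e1, e2, ← mul_add]
    | smul t y _ ih =>
      obtain ⟨z, hz, e⟩ := ih
      exact ⟨t • z, Submodule.smul_mem _ _ hz, by
        rw [mul_smul_comm, smul_mul_assoc, ← smul_sub, e, mul_smul_comm]⟩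
  | zero => intro y hy; exact ⟨0, zero_mem _, by simp⟩
  | add x1 x2 _ _ ih1 ih2 =>
    intro y hy
    obtain ⟨z1, hz1, e1⟩ := ih1 y hy
    obtain ⟨z2, hz2, e2⟩ := ih2 y hy
    refine ⟨z1 + z2, add_mem hz1 hz2, ?_⟩
    have hsplit : (x1 + x2) * y - y * (x1 + x2) =
        (x1 * y - y * x1) + (x2 * y - y * x2) := by noncomm_ring
    rw [hsplit, e1, e2, ← mul_add]
  | smul t x _ ih =>
    intro y hy
    obtain ⟨z, hz, e⟩ := ih y hy
    exact ⟨t • z, Submodule.smul_mem _ _ hz, by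
      rw [smul_mul_assoc, mul_smul_comm, ← smul_sub, e, mul_smul_comm]⟩
end
end

section
/- Let λ ∈ ℤⁿ satisfy 0 ≤ λ₁ ≤ λ₂ ≤ … ≤ λₙ. Then, as Laurent polynomials in ℤ[q, q⁻¹], Σ_{w ∈ W⁰} sgn(w) · q^{½(w(λ+ρ₀) − ρ, w(λ+ρ₀) − ρ) − ½(ρ₁,ρ₁)} = q^{½(λ+ρ₁, λ+ρ₁) − ½(ρ₁,ρ₁)} · Π_{α ∈ Φ⁺} (1 − q^{(λ+ρ₀, α)}), where all exponents appearing on both sides are integers. -/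
noncomputable section

variable (n : ℕ)

/-- The standard inner product on `ℚⁿ`. -/
def inn (x y : Fin n → ℚ) : ℚ := ∑ i, x i * y i

/-- The standard basis vector `ε_i` of `ℚⁿ`. -/
def stdV (i : Fin n) : Fin n → ℚ := Pi.single i 1

/-- The signed permutation `w_{σ,ε} ∈ W⁰` (hyperoctahedral group), acting on `ℚⁿ` by
`w(ε_i) = ε(σ(i))·ε_{σ(i)}`; every element of `W⁰` is `w_{σ,ε}` for exactly one pair
`(σ, ε)`. -/
def wAct (σ : Equiv.Perm (Fin n)) (ε : Fin n → ℤˣ) (x : Fin n → ℚ) : Fin n → ℚ :=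
  fun j => ((ε j : ℤ) : ℚ) * x (σ⁻¹ j)

/-- `sgn(w_{σ,ε}) = det(w_{σ,ε}) = sign(σ)·∏ᵢ εᵢ`. -/
def sgnW (σ : Equiv.Perm (Fin n)) (ε : Fin n → ℤˣ) : ℤ :=
  ((Equiv.Perm.sign σ * ∏ i, ε i : ℤˣ) : ℤ)

/-- `ρ₀ = Σₖ k·εₖ` (`k = 1, …, n`). -/
def rho0 : Fin n → ℚ := fun i => (i : ℚ) + 1

/-- `ρ₁ = ½ Σₖ εₖ`. -/
def rho1 : Fin n → ℚ := fun _ => 1 / 2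

/-- `ρ = ρ₀ − ρ₁`. -/
def rhoV : Fin n → ℚ := fun i => rho0 n i - rho1 n i

/-- The monomial `q^e` (with rational exponent `e`), in the group algebra
`ℤ[q^ℚ] ⊇ ℤ[q, q⁻¹]`. -/
def qpow (e : ℚ) : AddMonoidAlgebra ℤ ℚ := AddMonoidAlgebra.single e 1

/-- The exponent `½(w(λ+ρ₀) − ρ, w(λ+ρ₀) − ρ) − ½(ρ₁, ρ₁)` for `w = w_{σ,ε}`. -/
def lhsExp (lam : Fin n → ℤ) (σ : Equiv.Perm (Fin n)) (ε : Fin n → ℤˣ) : ℚ :=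
  1 / 2 * inn n (fun j => wAct n σ ε (fun i => (lam i : ℚ) + rho0 n i) j - rhoV n j)
            (fun j => wAct n σ ε (fun i => (lam i : ℚ) + rho0 n i) j - rhoV n j)
    - 1 / 2 * inn n (rho1 n) (rho1 n)

/-- The exponent `½(λ+ρ₁, λ+ρ₁) − ½(ρ₁, ρ₁)`. -/
def rhsExp (lam : Fin n → ℤ) : ℚ :=
  1 / 2 * inn n (fun i => (lam i : ℚ) + rho1 n i) (fun i => (lam i : ℚ) + rho1 n i)
    - 1 / 2 * inn n (rho1 n) (rho1 n)

namespace WeylAux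
open Finset Polynomial

abbrev AA := AddMonoidAlgebra ℤ ℚ

lemma qpow_add (a b : ℚ) : qpow (a + b) = qpow a * qpow b := by
  simp [qpow, AddMonoidAlgebra.single_mul_single]

lemma qpow_zero : qpow 0 = 1 := AddMonoidAlgebra.one_def.symm

lemma qpow_sum {β : Type*} (s : Finset β) (f : β → ℚ) :
    qpow (∑ i ∈ s, f i) = ∏ i ∈ s, qpow (f i) := by
  classical
  induction s using Finset.induction with
  | empty => simp [qpow_zero]
  | insert a s h ih => rw [Finset.sum_insert h, Finset.prod_insert h, qpow_add, ih]

lemma single_eq_mul (e : ℚ) (c : ℤ) :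
    (AddMonoidAlgebra.single e c : AA) = (c : AA) * qpow e := by
  rw [← zsmul_eq_mul]
  unfold qpow
  rw [AddMonoidAlgebra.smul_single]
  norm_num

lemma inn_sub (f : Fin n → ℚ) (i j : Fin n) :
    inn n f (fun k => stdV n j k - stdV n i k) = f j - f i := by
  simp [inn, stdV, mul_sub, Finset.sum_sub_distrib, Pi.single_apply, mul_ite,
    Finset.sum_ite_eq']

lemma inn_add (f : Fin n → ℚ) (i j : Fin n) :
    inn n f (fun k => stdV n i k + stdV n j k) = f i + f j := by
  simp [inn, stdV, mul_add, Finset.sum_add_distrib, Pi.single_apply, mul_ite,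
    Finset.sum_ite_eq']

lemma inn_std (f : Fin n → ℚ) (i : Fin n) :
    inn n f (stdV n i) = f i := by
  simp [inn, stdV, Pi.single_apply, mul_ite, Finset.sum_ite_eq']

def muQ (lam : Fin n → ℤ) (i : Fin n) : ℚ := (lam i : ℚ) + (i : ℚ) + 1

lemma muQ_eq (lam : Fin n → ℤ) : (fun i => (lam i : ℚ) + rho0 n i) = muQ n lam := by
  funext i; simp [muQ, rho0]; ring

def Cexp (lam : Fin n → ℤ) : ℚ :=
  ∑ i, (muQ n lam i ^ 2 / 2 + ((i : ℚ) + 1/2) ^ 2 / 2 - 1/8)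

lemma lhsExp_expand (lam : Fin n → ℤ) (σ : Equiv.Perm (Fin n)) (ε : Fin n → ℤˣ) :
    lhsExp n lam σ ε
      = ∑ j, ((((ε j : ℤ) : ℚ) * muQ n lam (σ⁻¹ j) - ((j : ℚ) + 1/2)) ^ 2 / 2 - 1/8) := by
  unfold lhsExp inn wAct rhoV rho0 rho1 muQ
  rw [Finset.mul_sum, Finset.mul_sum, ← Finset.sum_sub_distrib]
  exact Finset.sum_congr rfl fun j _ => by ring

lemma units_sq (u : ℤˣ) : (((u : ℤ) : ℚ)) ^ 2 = 1 := by
  rcases Int.units_eq_one_or u with h | h <;> simp [h]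

lemma lhsExp_eq_C (lam : Fin n → ℤ) (σ : Equiv.Perm (Fin n)) (ε : Fin n → ℤˣ) :
    lhsExp n lam σ ε
      = Cexp n lam - ∑ j, ((ε j : ℤ) : ℚ) * (muQ n lam (σ⁻¹ j) * ((j : ℚ) + 1/2)) := by
  have key : ∀ j : Fin n, ((((ε j : ℤ) : ℚ) * muQ n lam (σ⁻¹ j) - ((j : ℚ) + 1/2)) ^ 2 / 2 - 1/8)
      = (muQ n lam (σ⁻¹ j) ^ 2 / 2 + ((j : ℚ) + 1/2) ^ 2 / 2 - 1/8)
        - ((ε j : ℤ) : ℚ) * (muQ n lam (σ⁻¹ j) * ((j : ℚ) + 1/2)) := by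
    intro j
    have he := units_sq (ε j)
    linear_combination (muQ n lam (σ⁻¹ j)) ^ 2 / 2 * he
  have split : ∀ h : Fin n → ℚ, ∑ j, (h j ^ 2 / 2 + ((j : ℚ) + 1/2) ^ 2 / 2 - 1/8)
      = (∑ j, h j ^ 2 / 2) + ∑ j : Fin n, (((j : ℚ) + 1/2) ^ 2 / 2 - 1/8) := by
    intro h; rw [← Finset.sum_add_distrib]; exact Finset.sum_congr rfl fun j _ => by ring
  have h1 : ∑ j, muQ n lam (σ⁻¹ j) ^ 2 / 2 = ∑ i, muQ n lam i ^ 2 / 2 :=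
    Equiv.sum_comp σ⁻¹ (fun i => muQ n lam i ^ 2 / 2)
  rw [lhsExp_expand, Finset.sum_congr rfl fun j _ => key j, Finset.sum_sub_distrib]
  unfold Cexp
  rw [split (fun j => muQ n lam (σ⁻¹ j)), split (fun i => muQ n lam i), h1]

lemma rhsExp_eq (lam : Fin n → ℤ) :
    rhsExp n lam = ∑ i, (((lam i : ℚ) ^ 2 + (lam i : ℚ)) / 2) := by
  unfold rhsExp inn rho1
  rw [Finset.mul_sum, Finset.mul_sum, ← Finset.sum_sub_distrib]
  exact Finset.sum_congr rfl fun i _ => by ring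

lemma half_int_sub (b : ℤ) : ∃ c : ℤ, (c : ℚ) = ((b : ℚ) ^ 2 - b) / 2 := by
  obtain ⟨c, hc⟩ := Int.even_mul_succ_self (b - 1)
  refine ⟨c, ?_⟩
  have hq : ((b : ℚ) - 1) * ((b : ℚ) - 1 + 1) = c + c := by exact_mod_cast hc
  linear_combination -hq / 2
  
lemma half_int_add (b : ℤ) : ∃ c : ℤ, (c : ℚ) = ((b : ℚ) ^ 2 + b) / 2 := by
  obtain ⟨c, hc⟩ := Int.even_mul_succ_self b
  refine ⟨c, ?_⟩
  have hq : (b : ℚ) * ((b : ℚ) + 1) = c + c := by exact_mod_cast hc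
  linear_combination -hq / 2


lemma qpow_pow (a : ℚ) (k : ℕ) : qpow a ^ k = qpow (k * a) := by
  induction k with
  | zero => simp [qpow_zero]
  | succ k ih =>
      rw [pow_succ, ih, ← qpow_add]
      congr 1
      push_cast
      ring

lemma dickson_natDegree_le : ∀ m : ℕ, (Polynomial.dickson 1 (1 : AA) m).natDegree ≤ m
  | 0 => by
      rw [Polynomial.dickson_zero]
      norm_num
  | 1 => by
      rw [Polynomial.dickson_one]
      exact Polynomial.natDegree_X_le
  | (m + 2) => by
      rw [Polynomial.dickson_add_two]
      refine le_trans (Polynomial.natDegree_sub_le _ _) ?_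
      rw [max_le_iff]
      constructor
      · refine le_trans (Polynomial.natDegree_mul_le) ?_
        have := dickson_natDegree_le (m + 1)
        rw [Polynomial.natDegree_X]
        omega
      · refine le_trans (Polynomial.natDegree_mul_le) ?_
        have := dickson_natDegree_le m
        simp only [Polynomial.natDegree_C]
        omega

lemma dickson_monic : ∀ m : ℕ, (Polynomial.dickson 1 (1 : AA) (m + 1)).Monic ∧
    (Polynomial.dickson 1 (1 : AA) (m + 1)).natDegree = m + 1
  | 0 => by
      rw [Polynomial.dickson_one]
      exact ⟨Polynomial.monic_X, Polynomial.natDegree_X⟩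
  | (m + 1) => by
      obtain ⟨hm, hd⟩ := dickson_monic m
      have hx : (Polynomial.X * Polynomial.dickson 1 (1 : AA) (m + 1)).Monic :=
        Polynomial.monic_X.mul hm
      have hxd : (Polynomial.X * Polynomial.dickson 1 (1 : AA) (m + 1)).natDegree = m + 2 := by
        rw [Polynomial.monic_X.natDegree_mul hm, Polynomial.natDegree_X, hd]
        omega

      have hlt : (Polynomial.C (1 : AA) * Polynomial.dickson 1 (1 : AA) m).degree
          < (Polynomial.X * Polynomial.dickson 1 (1 : AA) (m + 1)).degree := by
        rw [Polynomial.C_1, one_mul]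
        refine lt_of_le_of_lt Polynomial.degree_le_natDegree ?_
        rw [Polynomial.degree_eq_natDegree hx.ne_zero, hxd]
        exact_mod_cast lt_of_le_of_lt (dickson_natDegree_le m) (by omega : m < m + 2)
      constructor
      · rw [Polynomial.dickson_add_two, sub_eq_add_neg]
        exact hx.add_of_left (by rwa [Polynomial.degree_neg])
      · rw [Polynomial.dickson_add_two, sub_eq_add_neg,
          Polynomial.natDegree_add_eq_left_of_degree_lt (by rwa [Polynomial.degree_neg]), hxd]

/-- `Pp j` evaluated at `u + u⁻¹` is `∑_{m=-j}^{j} u^m`. -/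
def Pp (j : ℕ) : Polynomial AA := 1 + ∑ m ∈ Finset.range j, Polynomial.dickson 1 1 (m + 1)

lemma Pp_natDegree_le (j : ℕ) : (Pp j).natDegree ≤ j := by
  refine le_trans (Polynomial.natDegree_add_le _ _) ?_
  rw [max_le_iff, Polynomial.natDegree_one]
  refine ⟨Nat.zero_le _, Polynomial.natDegree_sum_le_of_forall_le _ _ fun m hm => ?_⟩
  have := dickson_natDegree_le (m + 1)
  have := Finset.mem_range.mp hm
  omega

lemma Pp_monic : ∀ j : ℕ, (Pp j).Monic ∧ (Pp j).natDegree = j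
  | 0 => by
      unfold Pp
      simp [Polynomial.monic_one]
  | (j + 1) => by
      have hsplit : Pp (j + 1) = Polynomial.dickson 1 1 (j + 1) + Pp j := by
        unfold Pp
        rw [Finset.sum_range_succ]
        ring
      obtain ⟨hm, hd⟩ := dickson_monic j
      have hlt : (Pp j).degree < (Polynomial.dickson 1 (1 : AA) (j + 1)).degree := by
        refine lt_of_le_of_lt Polynomial.degree_le_natDegree ?_
        rw [Polynomial.degree_eq_natDegree hm.ne_zero, hd]
        exact_mod_cast lt_of_le_of_lt (Pp_natDegree_le j) (by omega : j < j + 1)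
      constructor
      · rw [hsplit]; exact hm.add_of_left hlt
      · rw [hsplit, Polynomial.natDegree_add_eq_left_of_degree_lt hlt, hd]

lemma Pp_eval (x y : AA) (h : x * y = 1) (j : ℕ) :
    (Pp j).eval (x + y) = 1 + ∑ m ∈ Finset.range j, (x ^ (m + 1) + y ^ (m + 1)) := by
  unfold Pp
  rw [Polynomial.eval_add, Polynomial.eval_one, Polynomial.eval_finset_sum]
  congr 1
  exact Finset.sum_congr rfl fun m _ => Polynomial.dickson_one_one_eval_add_inv x y h (m + 1)

lemma expand2 (a b x : ℚ) :
    (qpow a - qpow b) * (qpow x + qpow (-x))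
      = qpow (a + x) + qpow (a - x) - qpow (b + x) - qpow (b - x) := by
  rw [sub_mul, mul_add, mul_add, ← qpow_add, ← qpow_add, ← qpow_add, ← qpow_add,
    show a + -x = a - x from by ring, show b + -x = b - x from by ring]
  ring

lemma entry_key (c : ℚ) : ∀ j : ℕ,
    qpow (-c * ((j : ℚ) + 1/2)) - qpow (c * ((j : ℚ) + 1/2))
      = (qpow (-c/2) - qpow (c/2))
          * (1 + ∑ m ∈ Finset.range j, (qpow (((m : ℚ) + 1) * c) + qpow (-(((m : ℚ) + 1) * c))))
  | 0 => by
      rw [show -c * (((0 : ℕ) : ℚ) + 1/2) = -c/2 from by push_cast; ring,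
        show c * (((0 : ℕ) : ℚ) + 1/2) = c/2 from by push_cast; ring]
      simp
  | (j + 1) => by
      have ih := entry_key c j
      rw [show -c * (((j + 1 : ℕ) : ℚ) + 1/2) = -c/2 - ((j : ℚ) + 1) * c from by push_cast; ring,
        show c * (((j + 1 : ℕ) : ℚ) + 1/2) = c/2 + ((j : ℚ) + 1) * c from by push_cast; ring,
        Finset.sum_range_succ, ← add_assoc, mul_add, ← ih, expand2,
        show -c/2 + ((j : ℚ) + 1) * c = c * ((j : ℚ) + 1/2) from by ring,
        show -c/2 - ((j : ℚ) + 1) * c = -c * ((j : ℚ) + 1/2) + -c from by ring,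
        show c/2 + ((j : ℚ) + 1) * c = c * ((j : ℚ) + 1/2) + c from by ring,
        show c/2 - ((j : ℚ) + 1) * c = -(c * ((j : ℚ) + 1/2)) from by ring,
        show (-c * ((j : ℚ) + 1/2) + -c) = -(c/2 + ((j : ℚ) + 1) * c) from by ring,
        show (c * ((j : ℚ) + 1/2) + c) = c/2 + ((j : ℚ) + 1) * c from by ring,
        show -(c * ((j : ℚ) + 1/2)) = -c * ((j : ℚ) + 1/2) from by ring]
      ring


lemma qpow_mul_neg (a : ℚ) : qpow a * qpow (-a) = 1 := by
  rw [← qpow_add, add_neg_cancel, qpow_zero]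

def Mmat (lam : Fin n → ℤ) : Matrix (Fin n) (Fin n) AA :=
  Matrix.of fun i j => qpow (-(muQ n lam i * ((j : ℚ) + 1/2)))
    - qpow (muQ n lam i * ((j : ℚ) + 1/2))

def yv (lam : Fin n → ℤ) (i : Fin n) : AA := qpow (muQ n lam i) + qpow (-(muQ n lam i))

lemma Mmat_eq (lam : Fin n → ℤ) (i j : Fin n) :
    Mmat n lam i j
      = (qpow (-(muQ n lam i)/2) - qpow ((muQ n lam i)/2)) * (Pp (j : ℕ)).eval (yv n lam i) := by
  have h := entry_key (muQ n lam i) (j : ℕ)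
  rw [show Mmat n lam i j = qpow (-(muQ n lam i * ((j : ℚ) + 1/2)))
      - qpow (muQ n lam i * ((j : ℚ) + 1/2)) from rfl,
    show -(muQ n lam i * ((j : ℚ) + 1/2)) = -(muQ n lam i) * (((j : ℕ) : ℚ) + 1/2) from by
      push_cast; ring,
    show muQ n lam i * ((j : ℚ) + 1/2) = muQ n lam i * (((j : ℕ) : ℚ) + 1/2) from by push_cast; ring,
    h]
  unfold yv
  rw [Pp_eval _ _ (qpow_mul_neg (muQ n lam i)) (j : ℕ)]
  congr 2
  refine Finset.sum_congr rfl fun m _ => ?_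
  rw [qpow_pow, qpow_pow]
  congr 2 <;> push_cast <;> ring

lemma units_sum (g : ℤˣ → AA) : ∑ u : ℤˣ, g u = g 1 + g (-1) := by
  have h : (Finset.univ : Finset ℤˣ) = {1, -1} := by
    ext u; simpa using Int.units_eq_one_or u
  rw [h, Finset.sum_insert (by decide), Finset.sum_singleton]

lemma hcol (lam : Fin n → ℤ) (σ : Equiv.Perm (Fin n)) (j : Fin n) :
    (∑ u : ℤˣ, ((u : ℤ) : AA)
        * qpow (-(((u : ℤ) : ℚ) * (muQ n lam (σ⁻¹ j) * ((j : ℚ) + 1/2)))))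
      = Mmat n lam (σ⁻¹ j) j := by
  rw [units_sum]
  show _ = qpow (-(muQ n lam (σ⁻¹ j) * ((j : ℚ) + 1/2)))
      - qpow (muQ n lam (σ⁻¹ j) * ((j : ℚ) + 1/2))
  simp only [Units.val_one, Int.cast_one, one_mul, Units.val_neg, Int.cast_neg, neg_mul, neg_neg]
  ring

lemma hdet (lam : Fin n → ℤ) :
    (Mmat n lam).det = ∑ σ : Equiv.Perm (Fin n),
      ((Equiv.Perm.sign σ : ℤ) : AA) * ∏ j, Mmat n lam (σ⁻¹ j) j := by
  rw [Matrix.det_apply',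
    ← Equiv.sum_comp (Equiv.inv (Equiv.Perm (Fin n)))
      (fun σ => ((Equiv.Perm.sign σ : ℤ) : AA) * ∏ i, Mmat n lam (σ i) i)]
  refine Finset.sum_congr rfl fun σ _ => ?_
  simp [Equiv.inv_apply, Equiv.Perm.sign_inv]

lemma sum_eq_det (lam : Fin n → ℤ) :
    (∑ σ : Equiv.Perm (Fin n), ∑ ε : Fin n → ℤˣ,
        (AddMonoidAlgebra.single (lhsExp n lam σ ε) (sgnW n σ ε) : AA))
      = qpow (Cexp n lam) * (Mmat n lam).det := by
  have step1 : ∀ σ : Equiv.Perm (Fin n),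
      (∑ ε : Fin n → ℤˣ, (AddMonoidAlgebra.single (lhsExp n lam σ ε) (sgnW n σ ε) : AA))
        = qpow (Cexp n lam)
            * (((Equiv.Perm.sign σ : ℤ) : AA) * ∏ j, Mmat n lam (σ⁻¹ j) j) := by
    intro σ
    have hrw : ∀ ε : Fin n → ℤˣ, (AddMonoidAlgebra.single (lhsExp n lam σ ε) (sgnW n σ ε) : AA)
        = qpow (Cexp n lam) * (((Equiv.Perm.sign σ : ℤ) : AA)
            * ∏ j, (((ε j : ℤ) : AA)
                * qpow (-(((ε j : ℤ) : ℚ) * (muQ n lam (σ⁻¹ j) * ((j : ℚ) + 1/2)))))) := by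
      intro ε
      have hexp : lhsExp n lam σ ε = Cexp n lam
          + ∑ j, -(((ε j : ℤ) : ℚ) * (muQ n lam (σ⁻¹ j) * ((j : ℚ) + 1/2))) := by
        rw [lhsExp_eq_C, Finset.sum_neg_distrib]
        ring
      have hs : ((sgnW n σ ε : ℤ) : AA)
          = ((Equiv.Perm.sign σ : ℤ) : AA) * ∏ j, ((ε j : ℤ) : AA) := by
        unfold sgnW; push_cast; ring
      rw [single_eq_mul, hexp, qpow_add, qpow_sum, hs, Finset.prod_mul_distrib,
        mul_left_comm, mul_assoc]
    calc (∑ ε : Fin n → ℤˣ, (AddMonoidAlgebra.single (lhsExp n lam σ ε) (sgnW n σ ε) : AA))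
        = ∑ ε : Fin n → ℤˣ, qpow (Cexp n lam) * (((Equiv.Perm.sign σ : ℤ) : AA)
            * ∏ j, (((ε j : ℤ) : AA)
                * qpow (-(((ε j : ℤ) : ℚ) * (muQ n lam (σ⁻¹ j) * ((j : ℚ) + 1/2)))))) :=
          Finset.sum_congr rfl fun ε _ => hrw ε
      _ = qpow (Cexp n lam) * (((Equiv.Perm.sign σ : ℤ) : AA)
            * ∑ ε : Fin n → ℤˣ, ∏ j, (((ε j : ℤ) : AA)
                * qpow (-(((ε j : ℤ) : ℚ) * (muQ n lam (σ⁻¹ j) * ((j : ℚ) + 1/2)))))) := by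
          rw [Finset.mul_sum, Finset.mul_sum]
      _ = qpow (Cexp n lam)
            * (((Equiv.Perm.sign σ : ℤ) : AA) * ∏ j, Mmat n lam (σ⁻¹ j) j) := by
          congr 1
          congr 1
          rw [← Fintype.piFinset_univ, Finset.sum_prod_piFinset (Finset.univ : Finset ℤˣ)
            (fun (j : Fin n) (u : ℤˣ) => ((u : ℤ) : AA)
              * qpow (-(((u : ℤ) : ℚ) * (muQ n lam (σ⁻¹ j) * ((j : ℚ) + 1/2)))))]
          exact Finset.prod_congr rfl fun j _ => hcol n lam σ j
  rw [Finset.sum_congr rfl fun σ _ => step1 σ, hdet, Finset.mul_sum]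

lemma det_Mmat (lam : Fin n → ℤ) :
    (Mmat n lam).det
      = (∏ i, (qpow (-(muQ n lam i)/2) - qpow ((muQ n lam i)/2)))
        * ∏ i, ∏ j ∈ Finset.Ioi i, (yv n lam j - yv n lam i) := by
  have h1 : Mmat n lam = Matrix.of (fun i j =>
      (qpow (-(muQ n lam i)/2) - qpow ((muQ n lam i)/2)) *
        (Matrix.of fun i j : Fin n => (Pp (j : ℕ)).eval (yv n lam i)) i j) := by
    exact Matrix.ext fun i j => Mmat_eq n lam i j
  rw [h1, Matrix.det_mul_column]
  congr 1
  rw [← Matrix.det_eval_matrixOfPolynomials_eq_det_vandermonde (yv n lam)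
      (fun j => Pp (j : ℕ)) (fun j => (Pp_monic (j : ℕ)).2) (fun j => (Pp_monic (j : ℕ)).1),
    Matrix.det_vandermonde]


lemma rfac (c : ℚ) : qpow (-c/2) - qpow (c/2) = qpow (-c/2) * (1 - qpow c) := by
  rw [mul_sub, mul_one, ← qpow_add, show -c/2 + c = c/2 from by ring]

lemma yfac (lam : Fin n → ℤ) (i j : Fin n) :
    yv n lam j - yv n lam i
      = qpow (-(muQ n lam j)) * ((1 - qpow (muQ n lam j - muQ n lam i))
          * (1 - qpow (muQ n lam i + muQ n lam j))) := by
  unfold yv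
  set a := muQ n lam i with ha
  set b := muQ n lam j with hb
  have hq : (1 - qpow (b - a)) * (1 - qpow (a + b))
      = 1 - qpow (b - a) - qpow (a + b) + qpow (2*b) := by
    have : qpow (b - a) * qpow (a + b) = qpow (2*b) := by
      rw [← qpow_add, show b - a + (a + b) = 2*b from by ring]
    rw [sub_mul, mul_sub, mul_sub, this]
    ring
  rw [hq, mul_add, mul_sub, mul_sub, mul_one, ← qpow_add, ← qpow_add, ← qpow_add,
    show -b + (b - a) = -a from by ring, show -b + (a + b) = a from by ring,
    show -b + 2*b = b from by ring]
  ring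

lemma exp_eq (lam : Fin n → ℤ) :
    Cexp n lam + ((∑ i, -(muQ n lam i)/2) + ∑ i, ∑ j ∈ Finset.Ioi i, -(muQ n lam j))
      = rhsExp n lam := by
  have hswap : ∑ i, ∑ j ∈ Finset.Ioi i, -(muQ n lam j)
      = ∑ j : Fin n, (((j : Fin n) : ℕ) : ℚ) * (-(muQ n lam j)) := by
    rw [Finset.sum_comm' (t' := (Finset.univ : Finset (Fin n))) (s' := fun j => Finset.Iio j)
      (fun x y => by simp)]
    refine Finset.sum_congr rfl fun j _ => ?_
    rw [Finset.sum_const, Fin.card_Iio, nsmul_eq_mul]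
  rw [rhsExp_eq, hswap]
  unfold Cexp
  rw [← Finset.sum_add_distrib, ← Finset.sum_add_distrib]
  refine Finset.sum_congr rfl fun i _ => ?_
  unfold muQ
  push_cast
  ring

lemma main_eq (lam : Fin n → ℤ) :
    (∑ σ : Equiv.Perm (Fin n), ∑ ε : Fin n → ℤˣ,
        (AddMonoidAlgebra.single (lhsExp n lam σ ε) (sgnW n σ ε) : AA))
      = qpow (rhsExp n lam)
          * ((∏ i, ∏ j ∈ Finset.Ioi i, (1 - qpow (muQ n lam j - muQ n lam i)))
            * (∏ i, ∏ j ∈ Finset.Ioi i, (1 - qpow (muQ n lam i + muQ n lam j)))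
            * ∏ i, (1 - qpow (muQ n lam i))) := by
  rw [sum_eq_det, det_Mmat]
  have h1 : ∏ i, (qpow (-(muQ n lam i)/2) - qpow ((muQ n lam i)/2))
      = qpow (∑ i, -(muQ n lam i)/2) * ∏ i, (1 - qpow (muQ n lam i)) := by
    rw [qpow_sum, ← Finset.prod_mul_distrib]
    exact Finset.prod_congr rfl fun i _ => rfac _
  have h2 : ∏ i, ∏ j ∈ Finset.Ioi i, (yv n lam j - yv n lam i)
      = qpow (∑ i, ∑ j ∈ Finset.Ioi i, -(muQ n lam j))
          * ∏ i, ∏ j ∈ Finset.Ioi i, ((1 - qpow (muQ n lam j - muQ n lam i))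
              * (1 - qpow (muQ n lam i + muQ n lam j))) := by
    rw [qpow_sum, ← Finset.prod_mul_distrib]
    refine Finset.prod_congr rfl fun i _ => ?_
    rw [qpow_sum, ← Finset.prod_mul_distrib]
    exact Finset.prod_congr rfl fun j _ => yfac n lam i j
  have h3 : ∏ i, ∏ j ∈ Finset.Ioi i, ((1 - qpow (muQ n lam j - muQ n lam i))
        * (1 - qpow (muQ n lam i + muQ n lam j)))
      = (∏ i, ∏ j ∈ Finset.Ioi i, (1 - qpow (muQ n lam j - muQ n lam i)))
        * ∏ i, ∏ j ∈ Finset.Ioi i, (1 - qpow (muQ n lam i + muQ n lam j)) := by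
    rw [← Finset.prod_mul_distrib]
    exact Finset.prod_congr rfl fun i _ => Finset.prod_mul_distrib
  rw [h1, h2, h3, ← exp_eq n lam, qpow_add, qpow_add]
  ac_rfl

lemma lhsExp_int (lam : Fin n → ℤ) (σ : Equiv.Perm (Fin n)) (ε : Fin n → ℤˣ) :
    ∃ z : ℤ, (z : ℚ) = lhsExp n lam σ ε := by
  have h : lhsExp n lam σ ε = ∑ j,
      (((((ε j : ℤ) * (lam (σ⁻¹ j) + ((σ⁻¹ j : Fin n) : ℕ) + 1) - ((j : ℕ) : ℤ)) : ℤ) : ℚ) ^ 2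
        - ((((ε j : ℤ) * (lam (σ⁻¹ j) + ((σ⁻¹ j : Fin n) : ℕ) + 1) - ((j : ℕ) : ℤ)) : ℤ) : ℚ))/2 := by
    rw [lhsExp_expand]
    refine Finset.sum_congr rfl fun j _ => ?_
    unfold muQ
    push_cast
    ring
  choose zf hzf using fun j : Fin n =>
    half_int_sub ((ε j : ℤ) * (lam (σ⁻¹ j) + ((σ⁻¹ j : Fin n) : ℕ) + 1) - ((j : ℕ) : ℤ))
  refine ⟨∑ j, zf j, ?_⟩
  rw [h, Int.cast_sum]
  exact Finset.sum_congr rfl fun j _ => hzf j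

lemma rhsExp_int (lam : Fin n → ℤ) : ∃ z : ℤ, (z : ℚ) = rhsExp n lam := by
  choose zf hzf using fun i : Fin n => half_int_add (lam i)
  refine ⟨∑ i, zf i, ?_⟩
  rw [rhsExp_eq, Int.cast_sum]
  exact Finset.sum_congr rfl fun i _ => hzf i


lemma inn_mu_sub (lam : Fin n → ℤ) (i j : Fin n) :
    inn n (fun i => (lam i : ℚ) + rho0 n i) (fun k => stdV n j k - stdV n i k)
      = muQ n lam j - muQ n lam i := by
  rw [inn_sub]; unfold muQ rho0; ring

lemma inn_mu_add (lam : Fin n → ℤ) (i j : Fin n) :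
    inn n (fun i => (lam i : ℚ) + rho0 n i) (fun k => stdV n i k + stdV n j k)
      = muQ n lam i + muQ n lam j := by
  rw [inn_add]; unfold muQ rho0; ring

lemma inn_mu_std (lam : Fin n → ℤ) (i : Fin n) :
    inn n (fun i => (lam i : ℚ) + rho0 n i) (stdV n i) = muQ n lam i := by
  rw [inn_std]; unfold muQ rho0; ring

end WeylAux

open WeylAux

/-- For a dominant integral weight `λ` (`0 ≤ λ₁ ≤ … ≤ λₙ`),
`Σ_{w ∈ W⁰} sgn(w) q^{½(w(λ+ρ₀)−ρ, w(λ+ρ₀)−ρ) − ½(ρ₁,ρ₁)}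
  = q^{½(λ+ρ₁,λ+ρ₁) − ½(ρ₁,ρ₁)} Π_{α ∈ Φ⁺} (1 − q^{(λ+ρ₀,α)})`,
where `Φ⁺` is the set of positive roots of `so(2n+1)`, and all the exponents appearing
on either side are integers. -/
theorem weyl_sum_eq_product
    (hn : 1 ≤ n) (lam : Fin n → ℤ)
    (hmono : Monotone lam) (h0 : ∀ i, 0 ≤ lam i) :
    -- all exponents are integers
    (∀ (σ : Equiv.Perm (Fin n)) (ε : Fin n → ℤˣ), ∃ z : ℤ, (z : ℚ) = lhsExp n lam σ ε) ∧
    (∃ z : ℤ, (z : ℚ) = rhsExp n lam) ∧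
    (∀ i j : Fin n, ∃ z : ℤ,
      (z : ℚ) = inn n (fun i => (lam i : ℚ) + rho0 n i) (fun k => stdV n j k - stdV n i k)) ∧
    (∀ i j : Fin n, ∃ z : ℤ,
      (z : ℚ) = inn n (fun i => (lam i : ℚ) + rho0 n i) (fun k => stdV n i k + stdV n j k)) ∧
    (∀ i : Fin n, ∃ z : ℤ,
      (z : ℚ) = inn n (fun i => (lam i : ℚ) + rho0 n i) (stdV n i)) ∧
    -- the identity itself
    (∑ σ : Equiv.Perm (Fin n), ∑ ε : Fin n → ℤˣ,
        (AddMonoidAlgebra.single (lhsExp n lam σ ε) (sgnW n σ ε) : AddMonoidAlgebra ℤ ℚ)) =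
      qpow (rhsExp n lam)
        * ((∏ i : Fin n, ∏ j ∈ Finset.Ioi i,
              (1 - qpow (inn n (fun i => (lam i : ℚ) + rho0 n i)
                (fun k => stdV n j k - stdV n i k))))
          * (∏ i : Fin n, ∏ j ∈ Finset.Ioi i,
              (1 - qpow (inn n (fun i => (lam i : ℚ) + rho0 n i)
                (fun k => stdV n i k + stdV n j k))))
          * ∏ i : Fin n,
              (1 - qpow (inn n (fun i => (lam i : ℚ) + rho0 n i) (stdV n i)))) := by
  refine ⟨lhsExp_int n lam, rhsExp_int n lam,
    fun i j => ⟨lam j + (j : ℕ) - (lam i + (i : ℕ)), by rw [inn_mu_sub]; unfold muQ; push_cast; ring⟩,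
    fun i j => ⟨lam i + (i : ℕ) + (lam j + (j : ℕ)) + 2, by rw [inn_mu_add]; unfold muQ; push_cast; ring⟩,
    fun i => ⟨lam i + (i : ℕ) + 1, by rw [inn_mu_std]; unfold muQ; push_cast; ring⟩, ?_⟩
  simp only [inn_mu_sub, inn_mu_add, inn_mu_std]
  exact main_eq n lam
end
end
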